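/- Under the assumptions above, F(h) ~ h^γ L(log h) as h ↓ 0, i.e. lim_{h↓0} F(h)/(h^γ L(log h)) = 1, where L(log s) = s^{-γ} F(log ψ(s)) is the (continuous, log w-periodic, positive) Harris function. -/

import Mathlib

open Filter Finset Set

theorem free_energy_critical_behavior
    (d : ℕ) (p : ℕ → ℝ) (f : ℝ → ℝ) (w γ : ℝ) (F ψ L : ℝ → ℝ)
    (hd : 2 ≤ d)
    (hp : ∀ i, i ≤ d → 0 ≤ p i)
    (hsum : ∑ i ∈ Finset.range (d + 1), p i = 1)
    (hpd : 0 < p d)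
    (hf : ∀ x, f x = ∑ i ∈ Finset.range (d + 1), p i * x ^ i)
    (hw : w = ∑ i ∈ Finset.range (d + 1), (i : ℝ) * p i)
    (hw1 : 1 < w)
    (hγ : γ = Real.log d / Real.log w)
    (hF : ∀ h : ℝ, 0 < h →
      Tendsto (fun n : ℕ => (d : ℝ) ^ (-(n : ℤ)) * Real.log (f^[n] (Real.exp h)))
        atTop (nhds (F h)))
    (hψcont : ContinuousOn ψ (Ici 0))
    (hψmono : StrictMonoOn ψ (Ici 0))
    (hψrange : ∀ s : ℝ, 0 ≤ s → 1 ≤ ψ s)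
    (hPoincare : ∀ s : ℝ, 0 ≤ s → ψ (w * s) = f (ψ s))
    (hψ0 : Tendsto (fun s : ℝ => (ψ s - 1 - s) / s) (nhdsWithin 0 (Ioi 0)) (nhds 0))
    (hL : ∀ s : ℝ, 0 < s → L (Real.log s) = s ^ (-γ) * F (Real.log (ψ s)))
    (hLcont : Continuous L)
    (hLper : ∀ t : ℝ, L (t + Real.log w) = L t)
    (hLpos : ∀ t : ℝ, 0 < L t) :
    Tendsto (fun h : ℝ => F h / (h ^ γ * L (Real.log h)))
      (nhdsWithin 0 (Ioi 0)) (nhds 1) := by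
  have hw0 : (0 : ℝ) < Real.log w := Real.log_pos hw1
  set src := nhdsWithin (0 : ℝ) (Ioi 0) with hsrcdef
  have hs_pos : ∀ᶠ s : ℝ in src, 0 < s := self_mem_nhdsWithin
  -- (ψ s - 1)/s → 1
  have hratio : Tendsto (fun s : ℝ => (ψ s - 1) / s) src (nhds 1) := by
    have h := hψ0.add (tendsto_const_nhds (x := (1 : ℝ)))
    rw [zero_add] at h
    refine h.congr' ?_
    filter_upwards [hs_pos] with s hs
    field_simp
    ring
  -- ψ → 1 at 0⁺
  have hψto1 : Tendsto ψ src (nhds 1) := by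
    have hid : Tendsto (fun s : ℝ => s) src (nhds 0) :=
      tendsto_id.mono_right nhdsWithin_le_nhds
    have h := hratio.mul hid
    rw [one_mul] at h
    have h2 : Tendsto (fun s : ℝ => ψ s - 1) src (nhds 0) := by
      refine h.congr' ?_
      filter_upwards [hs_pos] with s hs
      exact div_mul_cancel₀ _ (ne_of_gt hs)
    exact tendsto_sub_nhds_zero_iff.mp h2
  have hψzero : ψ 0 = 1 := by
    have hc : Tendsto ψ src (nhds (ψ 0)) :=
      (hψcont 0 self_mem_Ici).mono Ioi_subset_Ici_self
    exact tendsto_nhds_unique hc hψto1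
  have hψgt1 : ∀ s : ℝ, 0 < s → 1 < ψ s := by
    intro s hs
    rw [← hψzero]
    exact hψmono self_mem_Ici hs.le hs
  set g : ℝ → ℝ := fun s => Real.log (ψ s) with hgdef
  have hgpos : ∀ s : ℝ, 0 < s → 0 < g s := fun s hs => Real.log_pos (hψgt1 s hs)
  -- log ψ s / (ψ s - 1) → 1
  have hslope : Tendsto (fun s : ℝ => Real.log (ψ s) / (ψ s - 1)) src (nhds 1) := by
    have hd1 : HasDerivAt Real.log 1 1 := by
      simpa using Real.hasDerivAt_log one_ne_zero
    have h1 := hasDerivAt_iff_tendsto_slope.mp hd1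
    have h2 : Tendsto ψ src (nhdsWithin 1 {(1 : ℝ)}ᶜ) := by
      rw [tendsto_nhdsWithin_iff]
      refine ⟨hψto1, ?_⟩
      filter_upwards [hs_pos] with s hs
      exact (ne_of_gt (hψgt1 s hs))
    have h3 := h1.comp h2
    refine h3.congr' ?_
    filter_upwards [hs_pos] with s hs
    simp [Function.comp, slope_def_field, Real.log_one]
  -- g s / s → 1
  have hgs : Tendsto (fun s : ℝ => g s / s) src (nhds 1) := by
    have h := hslope.mul hratio
    rw [one_mul] at h
    refine h.congr' ?_
    filter_upwards [hs_pos] with s hs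
    have h1 : ψ s - 1 ≠ 0 := sub_ne_zero.mpr (ne_of_gt (hψgt1 s hs))
    field_simp
    rfl
  have hsg : Tendsto (fun s : ℝ => s / g s) src (nhds 1) := by
    have h := hgs.inv₀ one_ne_zero
    rw [inv_one] at h
    refine h.congr (fun s => ?_)
    rw [inv_div]
  -- the substitution filter inequality
  have hle : src ≤ Filter.map g src := by
    intro A hA
    rw [Filter.mem_map] at hA
    rcases mem_nhdsGT_iff_exists_Ioo_subset.mp hA with ⟨u, hu, hsub⟩
    have hu0 : (0 : ℝ) < u := hu
    set c := u / 2 with hcdef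
    have hc0 : 0 < c := by positivity
    have hcu : c < u := by rw [hcdef]; linarith
    have hgcont : ContinuousOn g (Icc 0 c) := by
      refine ContinuousOn.log (hψcont.mono (fun x hx => hx.1)) ?_
      intro x hx
      have := hψrange x hx.1
      linarith
    have hiv := intermediate_value_Ioo hc0.le hgcont
    have hg0 : g 0 = 0 := by simp [hgdef, hψzero]
    rw [hg0] at hiv
    have hgc : 0 < g c := hgpos c hc0
    refine mem_of_superset (Ioo_mem_nhdsGT_of_mem ⟨le_rfl, hgc⟩) ?_
    intro x hx
    rcases hiv hx with ⟨s, hs, rfl⟩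
    exact hsub ⟨hs.1, hs.2.trans hcu⟩
  -- uniform continuity of L from periodicity
  have hper : Function.Periodic L (Real.log w) := fun t => hLper t
  have hUC : ∀ ε : ℝ, 0 < ε → ∃ δ : ℝ, 0 < δ ∧
      ∀ x y : ℝ, |x - y| < δ → |L x - L y| < ε := by
    intro ε hε
    set c := Real.log w with hc
    have hK : IsCompact (Icc (-c) (2 * c)) := isCompact_Icc
    have hucOn := hK.uniformContinuousOn_of_continuous hLcont.continuousOn
    rw [Metric.uniformContinuousOn_iff] at hucOn
    rcases hucOn ε hε with ⟨δ₀, hδ₀, hδ⟩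
    refine ⟨min δ₀ c, lt_min hδ₀ hw0, ?_⟩
    intro x y hxy
    set n := ⌊x / c⌋ with hn
    have hx1 : 0 ≤ x - n * c := Int.sub_floor_div_mul_nonneg x hw0
    have hx2 : x - n * c < c := Int.sub_floor_div_mul_lt x hw0
    have hLx : L (x - n * c) = L x := hper.sub_int_mul_eq n
    have hLy : L (y - n * c) = L y := hper.sub_int_mul_eq n
    have hdlt : |x - y| < c := lt_of_lt_of_le hxy (min_le_right _ _)
    obtain ⟨ha, hb⟩ := abs_lt.mp hdlt
    have hmem1 : x - n * c ∈ Icc (-c) (2 * c) := ⟨by linarith, by linarith⟩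
    have hmem2 : y - n * c ∈ Icc (-c) (2 * c) := ⟨by linarith, by linarith⟩
    have heq : x - n * c - (y - n * c) = x - y := by ring
    have hdd : dist (x - n * c) (y - n * c) < δ₀ := by
      rw [Real.dist_eq, heq]
      exact lt_of_lt_of_le hxy (min_le_left _ _)
    have := hδ _ hmem1 _ hmem2 hdd
    rw [Real.dist_eq, hLx, hLy] at this
    exact this
  -- positive lower bound for L
  obtain ⟨t0, ht0mem, ht0min⟩ :=
    isCompact_Icc.exists_isMinOn (nonempty_Icc.mpr hw0.le) hLcont.continuousOn
  have hm : 0 < L t0 := hLpos t0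
  have hmle : ∀ t : ℝ, L t0 ≤ L t := by
    intro t
    obtain ⟨y, hy, hyt⟩ := hper.exists_mem_Ico₀ hw0 t
    rw [hyt]
    exact ht0min (Ico_subset_Icc_self hy)
  -- log (g s) - log s → 0
  have hdiff : Tendsto (fun s : ℝ => Real.log (g s) - Real.log s) src (nhds 0) := by
    have hlog1 : Tendsto (fun s : ℝ => Real.log (g s / s)) src (nhds 0) := by
      have h := (Real.continuousAt_log one_ne_zero).tendsto.comp hgs
      simpa [Function.comp_def] using h
    refine hlog1.congr' ?_
    filter_upwards [hs_pos] with s hs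
    rw [Real.log_div (ne_of_gt (hgpos s hs)) (ne_of_gt hs)]
  -- L(log (g s)) - L(log s) → 0
  have hΔ : Tendsto (fun s : ℝ => L (Real.log (g s)) - L (Real.log s)) src (nhds 0) := by
    rw [Metric.tendsto_nhds]
    intro ε hε
    rcases hUC ε hε with ⟨δ, hδ0, hδ⟩
    have h := (Metric.tendsto_nhds.mp hdiff) δ hδ0
    filter_upwards [h] with s hs
    rw [Real.dist_eq, sub_zero] at hs ⊢
    exact hδ _ _ hs
  -- ratio of L values → 1
  have hB : Tendsto (fun s : ℝ => L (Real.log s) / L (Real.log (g s))) src (nhds 1) := by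
    rw [← tendsto_sub_nhds_zero_iff]
    have hbound : Tendsto (fun s : ℝ => |L (Real.log (g s)) - L (Real.log s)| / L t0)
        src (nhds 0) := by
      have h := hΔ.abs.div_const (L t0)
      simpa using h
    refine squeeze_zero_norm' ?_ hbound
    filter_upwards [hs_pos] with s hs
    have hg1 : 0 < L (Real.log (g s)) := hLpos _
    have heq : L (Real.log s) / L (Real.log (g s)) - 1
        = (L (Real.log s) - L (Real.log (g s))) / L (Real.log (g s)) := by
      field_simp
    rw [heq, Real.norm_eq_abs, abs_div, abs_of_pos hg1, abs_sub_comm]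
    gcongr
    · exact hmle _
  -- (s / g s)^γ → 1
  have hA : Tendsto (fun s : ℝ => (s / g s) ^ γ) src (nhds 1) := by
    have hc : ContinuousAt (fun x : ℝ => x ^ γ) 1 :=
      Real.continuousAt_rpow_const 1 γ (Or.inl one_ne_zero)
    have h := hc.tendsto.comp hsg
    simpa [Real.one_rpow, Function.comp_def] using h
  -- main composite limit
  have key : Tendsto ((fun h : ℝ => F h / (h ^ γ * L (Real.log h))) ∘ g) src (nhds 1) := by
    have hprod := hA.mul hB
    rw [one_mul] at hprod
    refine hprod.congr' ?_
    filter_upwards [hs_pos] with s hs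
    have hg1 : 0 < g s := hgpos s hs
    have hFval : F (g s) = s ^ γ * L (Real.log s) := by
      have h1 := hL s hs
      have h2 : s ^ γ * s ^ (-γ) = 1 := by
        rw [← Real.rpow_add hs]; simp
      show F (Real.log (ψ s)) = s ^ γ * L (Real.log s)
      rw [h1, ← mul_assoc, h2, one_mul]
    show (s / g s) ^ γ * (L (Real.log s) / L (Real.log (g s)))
        = F (g s) / ((g s) ^ γ * L (Real.log (g s)))
    rw [hFval, mul_div_mul_comm, Real.div_rpow hs.le hg1.le]
  exact (tendsto_map'_iff.mpr key).mono_left hle
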